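/- arXiv:1705.08959 — 7 statements merged into one kernel-verified Lean document; each statement's English description precedes it below -/
import Mathlib

section
/- Let β and ξ3 be nonzero complex numbers. The linear map from 𝔥 to 𝔭 determined on basis vectors by X1 ↦ iβ·P0, X2 ↦ β·P1, X3 ↦ 2iξ3·M01 is an isomorphism of complex Lie algebras; in particular, the reduced algebra 𝔥 is isomorphic to the two-dimensional Poincaré Lie algebra 𝔭. -/
open Complex

/-- the reduced algebra `𝔥` (basis `X1 = bH 0`, `X2 = bH 1`, `X3 = bH 2`)
is isomorphic, as a complex Lie algebra, to the two-dimensional Poincaré algebra `𝔭`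
(basis `P0 = bP 0`, `P1 = bP 1`, `M01 = bP 2`) via the linear map determined by
`X1 ↦ iβ•P0`, `X2 ↦ β•P1`, `X3 ↦ 2iξ3•M01`. -/
theorem reduced_algebra_iso_poincare2 (β ξ3 : ℂ) (hβ : β ≠ 0) (hξ3 : ξ3 ≠ 0)
    {H P : Type*} [LieRing H] [LieAlgebra ℂ H] [LieRing P] [LieAlgebra ℂ P]
    (bH : Module.Basis (Fin 3) ℂ H) (bP : Module.Basis (Fin 3) ℂ P)
    (hH12 : ⁅bH 0, bH 1⁆ = 0)
    (hH13 : ⁅bH 0, bH 2⁆ = (-(2 * I * ξ3)) • bH 1)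
    (hH23 : ⁅bH 1, bH 2⁆ = (2 * I * ξ3) • bH 0)
    (hP01 : ⁅bP 0, bP 1⁆ = 0)
    (hP0M : ⁅bP 0, bP 2⁆ = I • bP 1)
    (hP1M : ⁅bP 1, bP 2⁆ = I • bP 0) :
    ∃ e : H ≃ₗ⁅ℂ⁆ P,
      e (bH 0) = (I * β) • bP 0 ∧ e (bH 1) = β • bP 1 ∧ e (bH 2) = (2 * I * ξ3) • bP 2 := by
  have hI : I ≠ 0 := I_ne_zero
  have h2 : (2 : ℂ) ≠ 0 := two_ne_zero
  have hc1' : I * β ≠ 0 := by simp [hβ, hI]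
  have hc3' : 2 * I * ξ3 ≠ 0 := by simp [hξ3, hI]
  let f : H →ₗ[ℂ] P := bH.constr ℂ ![(I * β) • bP 0, β • bP 1, (2 * I * ξ3) • bP 2]
  let g : P →ₗ[ℂ] H := bP.constr ℂ ![(I * β)⁻¹ • bH 0, β⁻¹ • bH 1, (2 * I * ξ3)⁻¹ • bH 2]
  have hf : ∀ i, f (bH i) = (![(I * β) • bP 0, β • bP 1, (2 * I * ξ3) • bP 2]) i := fun i =>
    bH.constr_basis ℂ _ i
  have hg : ∀ i, g (bP i) = (![(I * β)⁻¹ • bH 0, β⁻¹ • bH 1, (2 * I * ξ3)⁻¹ • bH 2]) i := fun i =>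
    bP.constr_basis ℂ _ i
  have hf0 : f (bH 0) = (I * β) • bP 0 := hf 0
  have hf1 : f (bH 1) = β • bP 1 := hf 1
  have hf2 : f (bH 2) = (2 * I * ξ3) • bP 2 := hf 2
  have hg0 : g (bP 0) = (I * β)⁻¹ • bH 0 := hg 0
  have hg1 : g (bP 1) = β⁻¹ • bH 1 := hg 1
  have hg2 : g (bP 2) = (2 * I * ξ3)⁻¹ • bH 2 := hg 2
  have hgf : g.comp f = LinearMap.id := by
    apply bH.ext
    intro i
    fin_cases i
    · show g (f (bH 0)) = bH 0
      rw [hf0, map_smul, hg0, smul_smul, mul_inv_cancel₀ hc1', one_smul]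
    · show g (f (bH 1)) = bH 1
      rw [hf1, map_smul, hg1, smul_smul, mul_inv_cancel₀ hβ, one_smul]
    · show g (f (bH 2)) = bH 2
      rw [hf2, map_smul, hg2, smul_smul, mul_inv_cancel₀ hc3', one_smul]
  have hfg : f.comp g = LinearMap.id := by
    apply bP.ext
    intro i
    fin_cases i
    · show f (g (bP 0)) = bP 0
      rw [hg0, map_smul, hf0, smul_smul, inv_mul_cancel₀ hc1', one_smul]
    · show f (g (bP 1)) = bP 1
      rw [hg1, map_smul, hf1, smul_smul, inv_mul_cancel₀ hβ, one_smul]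
    · show f (g (bP 2)) = bP 2
      rw [hg2, map_smul, hf2, smul_smul, inv_mul_cancel₀ hc3', one_smul]
  -- brackets as bilinear maps
  let BH : H →ₗ[ℂ] H →ₗ[ℂ] H := LinearMap.mk₂ ℂ (fun x y => ⁅x, y⁆)
    add_lie smul_lie lie_add lie_smul
  let BP : P →ₗ[ℂ] P →ₗ[ℂ] P := LinearMap.mk₂ ℂ (fun x y => ⁅x, y⁆)
    add_lie smul_lie lie_add lie_smul
  have hH21 : ⁅bH 1, bH 0⁆ = 0 := by rw [← lie_skew, hH12, neg_zero]
  have hH31 : ⁅bH 2, bH 0⁆ = -((-(2 * I * ξ3)) • bH 1) := by rw [← lie_skew, hH13]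
  have hH32 : ⁅bH 2, bH 1⁆ = -((2 * I * ξ3) • bH 0) := by rw [← lie_skew, hH23]
  have hP10 : ⁅bP 1, bP 0⁆ = 0 := by rw [← lie_skew, hP01, neg_zero]
  have hPM0 : ⁅bP 2, bP 0⁆ = -(I • bP 1) := by rw [← lie_skew, hP0M]
  have hPM1 : ⁅bP 2, bP 1⁆ = -(I • bP 0) := by rw [← lie_skew, hP1M]
  have key : BH.compr₂ f = LinearMap.compl₁₂ BP f f := by
    apply bH.ext; intro i
    apply bH.ext; intro j
    fin_cases i <;> fin_cases j <;>
      simp [BH, BP, hf, hH12, hH13, hH23, hH21, hH31, hH32, smul_smul, lie_smul, smul_lie,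
        hP01, hP0M, hP1M, hP10, hPM0, hPM1] <;>
      match_scalars <;>
      first
        | ring1
        | (ring_nf; rw [(by ring : (I : ℂ) ^ 3 = I ^ 2 * I), Complex.I_sq]; ring1)
  have key' : ∀ x y : H, f ⁅x, y⁆ = ⁅f x, f y⁆ := fun x y =>
    LinearMap.congr_fun (LinearMap.congr_fun key x) y
  let e : H ≃ₗ⁅ℂ⁆ P :=
    { toLinearMap := f, map_lie' := fun {x y} => key' x y, invFun := g,
      left_inv := fun x => LinearMap.congr_fun hgf x,
      right_inv := fun x => LinearMap.congr_fun hfg x }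
  exact ⟨e, hf 0, hf 1, hf 2⟩
end

section
/- The element O1 := ξ3·X0 − ξ0·X3 lies in the center of the universal enveloping algebra U(𝔤); that is, O1 commutes with every element of U(𝔤). -/
open Complex

/-- The canonical image of the basis vector `b μ` in the universal enveloping algebra. -/
noncomputable def Xgen {L : Type*} [LieRing L] [LieAlgebra ℂ L]
    (b : Module.Basis (Fin 4) ℂ L) (μ : Fin 4) : UniversalEnvelopingAlgebra ℂ L :=
  UniversalEnvelopingAlgebra.ι ℂ (b μ)

attribute [local instance 100] LieRing.ofAssociativeRing

set_option synthInstance.maxHeartbeats 1000000 in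
set_option maxHeartbeats 1000000 in
/-- `O1 := ξ3·X0 − ξ0·X3` lies in the center of `U(𝔤)`. -/
theorem O1_central (ξ0 ξ3 : ℂ)
    {L : Type*} [LieRing L] [LieAlgebra ℂ L]
    (b : Module.Basis (Fin 4) ℂ L)
    (h10 : ⁅b 1, b 0⁆ = (-(2 * I * ξ0)) • b 2)
    (h13 : ⁅b 1, b 3⁆ = (-(2 * I * ξ3)) • b 2)
    (h20 : ⁅b 2, b 0⁆ = (2 * I * ξ0) • b 1)
    (h23 : ⁅b 2, b 3⁆ = (2 * I * ξ3) • b 1)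
    (h03 : ⁅b 0, b 3⁆ = 0)
    (h12 : ⁅b 1, b 2⁆ = 0) :
    ∀ u : UniversalEnvelopingAlgebra ℂ L,
      (ξ3 • Xgen b 0 - ξ0 • Xgen b 3) * u = u * (ξ3 • Xgen b 0 - ξ0 • Xgen b 3) := by
  intro u
  set w : L := ξ3 • b 0 - ξ0 • b 3 with hw
  -- bracket of every element of L with w vanishes
  have hbw : ∀ y : L, ⁅y, w⁆ = 0 := by
    have key : ∀ μ : Fin 4, ⁅b μ, w⁆ = 0 := by
      intro μ
      fin_cases μ <;>
        simp [hw, lie_smul, lie_sub, h10, h13, h20, h23, h03, h12,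
          ← lie_skew (b 3) (b 0), ← lie_skew (b 2) (b 1), smul_smul] <;>
        ring_nf <;>
        module
    intro y
    have : (LinearMap.mk₂ ℂ (fun a c : L => ⁅a, c⁆) add_lie smul_lie lie_add lie_smul).flip w
        = 0 := by
      apply b.ext
      intro i
      simpa using key i
    simpa using congrArg (fun f => f y) this
  have hz : (ξ3 • Xgen b 0 - ξ0 • Xgen b 3) = UniversalEnvelopingAlgebra.ι ℂ w := by
    simp [Xgen, hw]
  rw [hz]
  -- commutation with generators
  have hcomm : ∀ y : L,
      Commute (UniversalEnvelopingAlgebra.ι ℂ y) (UniversalEnvelopingAlgebra.ι ℂ w) := by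
    intro y
    have h := (UniversalEnvelopingAlgebra.ι ℂ (L := L)).map_lie y w
    rw [hbw y] at h
    have h2 : ⁅UniversalEnvelopingAlgebra.ι ℂ y, UniversalEnvelopingAlgebra.ι ℂ w⁆
        = (0 : UniversalEnvelopingAlgebra ℂ L) := by rw [← h]; simp
    rw [Ring.lie_def, sub_eq_zero] at h2
    exact h2
  -- the image of ι generates U(𝔤)
  have htop : Algebra.adjoin ℂ
      (Set.range (UniversalEnvelopingAlgebra.ι ℂ (L := L))) = ⊤ := by
    set A := Algebra.adjoin ℂ (Set.range (UniversalEnvelopingAlgebra.ι ℂ (L := L)))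
    have hmem : ∀ x : L, UniversalEnvelopingAlgebra.ι ℂ x ∈ A :=
      fun x => Algebra.subset_adjoin (Set.mem_range_self x)
    let f : L →ₗ⁅ℂ⁆ A :=
      { toFun := fun x => ⟨UniversalEnvelopingAlgebra.ι ℂ x, hmem x⟩
        map_add' := fun x y => by ext; simp
        map_smul' := fun c x => by ext; simp
        map_lie' := fun {x y} => by
          ext
          show _ = (⁅(⟨UniversalEnvelopingAlgebra.ι ℂ x, hmem x⟩ : A),
            (⟨UniversalEnvelopingAlgebra.ι ℂ y, hmem y⟩ : A)⁆ : A).val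
          rw [Ring.lie_def]
          simp [Ring.lie_def] }
    have hcomp : A.val.comp (UniversalEnvelopingAlgebra.lift ℂ f) =
        AlgHom.id ℂ (UniversalEnvelopingAlgebra ℂ L) := by
      apply UniversalEnvelopingAlgebra.hom_ext
      ext x
      simp [UniversalEnvelopingAlgebra.lift_ι_apply, f]
    rw [eq_top_iff]
    intro u _
    have : A.val ((UniversalEnvelopingAlgebra.lift ℂ f) u) = u := by
      have := congrArg (fun g => g u) hcomp
      simpa using this
    rw [← this]
    exact ((UniversalEnvelopingAlgebra.lift ℂ f) u).2
  have hu : u ∈ Algebra.adjoin ℂ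
      (Set.range (UniversalEnvelopingAlgebra.ι ℂ (L := L))) := htop ▸ trivial
  refine Algebra.adjoin_induction ?_ ?_ ?_ ?_ hu
  · rintro x ⟨y, rfl⟩; exact ((hcomm y).symm).eq
  · intro r; simp [Algebra.commutes]
  · intro a c _ _ ha hc; rw [add_mul, mul_add, ha, hc]
  · intro a c _ _ ha hc; rw [mul_assoc, ← hc, ← mul_assoc, ha, mul_assoc]
end

section
/- The element O2 := X1² + X2² lies in the center of the universal enveloping algebra U(𝔤); that is, O2 commutes with every element of U(𝔤). -/
open Complex

/-- Key ring computation: if `[x,z] = -c•y` and `[y,z] = c•x` then `x²+y²` commutes with `z`. -/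
lemma aux_comm {R : Type*} [Ring R] [Algebra ℂ R] (x y z : R) (c : ℂ)
    (h1 : x * z - z * x = -(c • y)) (h2 : y * z - z * y = c • x) :
    (x ^ 2 + y ^ 2) * z = z * (x ^ 2 + y ^ 2) := by
  have key : (x ^ 2 + y ^ 2) * z - z * (x ^ 2 + y ^ 2)
      = x * (x * z - z * x) + (x * z - z * x) * x
        + (y * (y * z - z * y) + (y * z - z * y) * y) := by noncomm_ring
  rw [h1, h2] at key
  have h : (x ^ 2 + y ^ 2) * z - z * (x ^ 2 + y ^ 2) = 0 := by
    rw [key]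
    simp [mul_smul_comm, smul_mul_assoc]
  exact sub_eq_zero.mp h

attribute [local instance 100] LieRing.ofAssociativeRing

set_option synthInstance.maxHeartbeats 1000000 in
set_option maxHeartbeats 1000000 in
/-- `O2 := X1² + X2²` lies in the center of `U(𝔤)`. -/
theorem O2_central (ξ0 ξ3 : ℂ)
    {L : Type*} [LieRing L] [LieAlgebra ℂ L]
    (b : Module.Basis (Fin 4) ℂ L)
    (h10 : ⁅b 1, b 0⁆ = (-(2 * I * ξ0)) • b 2)
    (h13 : ⁅b 1, b 3⁆ = (-(2 * I * ξ3)) • b 2)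
    (h20 : ⁅b 2, b 0⁆ = (2 * I * ξ0) • b 1)
    (h23 : ⁅b 2, b 3⁆ = (2 * I * ξ3) • b 1)
    (h03 : ⁅b 0, b 3⁆ = 0)
    (h12 : ⁅b 1, b 2⁆ = 0) :
    ∀ u : UniversalEnvelopingAlgebra ℂ L,
      (Xgen b 1 ^ 2 + Xgen b 2 ^ 2) * u = u * (Xgen b 1 ^ 2 + Xgen b 2 ^ 2) := by
  set U := UniversalEnvelopingAlgebra ℂ L
  set ι := UniversalEnvelopingAlgebra.ι ℂ (L := L) with hι
  set O2 : U := Xgen b 1 ^ 2 + Xgen b 2 ^ 2 with hO2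
  -- commutator of images
  have comm : ∀ x y : L, ι x * ι y - ι y * ι x = ι ⁅x, y⁆ := by
    intro x y
    rw [LieHom.map_lie]
    rfl
  -- O2 commutes with every ι x
  have hgen : ∀ μ : Fin 4, O2 * ι (b μ) = ι (b μ) * O2 := by
    intro μ
    have e10 := comm (b 1) (b 0); rw [h10] at e10
    have e20 := comm (b 2) (b 0); rw [h20] at e20
    have e13 := comm (b 1) (b 3); rw [h13] at e13
    have e23 := comm (b 2) (b 3); rw [h23] at e23
    have e12 := comm (b 1) (b 2); rw [h12] at e12
    simp only [map_smul, map_neg, map_zero] at e10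
    simp only [map_smul, map_neg, map_zero] at e20
    simp only [map_smul, map_neg, map_zero] at e13
    simp only [map_smul, map_neg, map_zero] at e23
    simp only [map_smul, map_neg, map_zero] at e12
    rw [neg_smul] at e10 e13
    have e21 : ι (b 2) * ι (b 1) - ι (b 1) * ι (b 2) = 0 := by
      rw [← neg_sub, e12, neg_zero]
    have e11 : ι (b 1) * ι (b 1) - ι (b 1) * ι (b 1) = -((0:ℂ) • ι (b 2)) := by
      rw [sub_self, zero_smul, neg_zero]
    have e21' : ι (b 2) * ι (b 1) - ι (b 1) * ι (b 2) = (0:ℂ) • ι (b 1) := by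
      rw [e21, zero_smul]
    have e12' : ι (b 1) * ι (b 2) - ι (b 2) * ι (b 1) = -((0:ℂ) • ι (b 2)) := by
      rw [e12, zero_smul, neg_zero]
    have e22 : ι (b 2) * ι (b 2) - ι (b 2) * ι (b 2) = (0:ℂ) • ι (b 1) := by
      rw [sub_self, zero_smul]
    fin_cases μ
    · exact aux_comm (ι (b 1)) (ι (b 2)) (ι (b 0)) (2 * I * ξ0) e10 e20
    · exact aux_comm (ι (b 1)) (ι (b 2)) (ι (b 1)) 0 e11 e21'
    · exact aux_comm (ι (b 1)) (ι (b 2)) (ι (b 2)) 0 e12' e22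
    · exact aux_comm (ι (b 1)) (ι (b 2)) (ι (b 3)) (2 * I * ξ3) e13 e23
  have hx : ∀ x : L, O2 * ι x = ι x * O2 := by
    have := b.ext (f₁ := (LinearMap.mulLeft ℂ O2).comp ι.toLinearMap)
      (f₂ := (LinearMap.mulRight ℂ O2).comp ι.toLinearMap) (by
        intro μ
        simpa using hgen μ)
    intro x
    simpa using LinearMap.congr_fun this x
  -- the centralizer of O2 is a subalgebra containing the image of ι
  set S : Subalgebra ℂ U := Subalgebra.centralizer ℂ {O2} with hS
  have hmem : ∀ x : L, ι x ∈ S := by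
    intro x
    rw [hS, Subalgebra.mem_centralizer_iff]
    rintro g rfl
    exact hx x
  -- Lie algebra hom into S
  let f : L →ₗ⁅ℂ⁆ S :=
    { toFun := fun x => ⟨ι x, hmem x⟩
      map_add' := fun x y => by ext; simp
      map_smul' := fun c x => by ext; simp
      map_lie' := fun {x y} => by
        ext
        show (ι ⁅x, y⁆ : U) = ((⁅(⟨ι x, hmem x⟩ : S), (⟨ι y, hmem y⟩ : S)⁆ : S) : U)
        rw [Ring.lie_def]
        push_cast
        rw [← comm] }
  set g := UniversalEnvelopingAlgebra.lift ℂ f with hg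
  have hval : S.val.comp g = AlgHom.id ℂ U := by
    apply UniversalEnvelopingAlgebra.hom_ext
    ext x
    simp [hg, UniversalEnvelopingAlgebra.lift_ι_apply, f]
    rfl
  intro u
  have hu : u ∈ S := by
    have : S.val (g u) = u := by
      have := AlgHom.congr_fun hval u
      exact this
    rw [← this]
    exact (g u).2
  exact (Subalgebra.mem_centralizer_iff ℂ).mp hu O2 rfl
end

section
/- In U(𝔤), with g01 := α·X1 + β·(X1·X3 + X3·X1), g02 := α·X2 + β·(X2·X3 + X3·X2), g11 := δ·X1², and g12 := δ·X1·X2, the following identity holds: g11·g02 − g01·g12 = 2iξ3·β·δ·X1·(4·X1² − 3·O2), where O2 := X1² + X2². -/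
open Complex

lemma aux_ring {A : Type*} [Ring A] (x y z w : A)
    (hwx : w*x = x*w)
    (h1 : z*x = x*z + w*y) (h2 : z*y = y*z - w*x) (h3 : y*x = x*y) :
    x*x*(y*z) + x*x*(z*y) - x*z*(x*y) - z*x*(x*y)
      = w*(x*(x*x)) - 3*(w*(x*(y*y))) := by
  linear_combination (norm := noncomm_ring)
    (-1)*(x*x)*h2 - 2*x*h1*y - h1*x*y - w*h3*y
      + 2*hwx*y*y - x*hwx*x - hwx*x*x


/-- `g11·g02 − g01·g12 = 2iξ3·β·δ·X1·(4X1² − 3O2)` in `U(𝔤)`. -/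
theorem J4_identity (ξ0 ξ3 α β δ : ℂ)
    {L : Type*} [LieRing L] [LieAlgebra ℂ L]
    (b : Module.Basis (Fin 4) ℂ L)
    (h10 : ⁅b 1, b 0⁆ = (-(2 * I * ξ0)) • b 2)
    (h13 : ⁅b 1, b 3⁆ = (-(2 * I * ξ3)) • b 2)
    (h20 : ⁅b 2, b 0⁆ = (2 * I * ξ0) • b 1)
    (h23 : ⁅b 2, b 3⁆ = (2 * I * ξ3) • b 1)
    (h03 : ⁅b 0, b 3⁆ = 0)
    (h12 : ⁅b 1, b 2⁆ = 0) :
    (δ • Xgen b 1 ^ 2) * (α • Xgen b 2 + β • (Xgen b 2 * Xgen b 3 + Xgen b 3 * Xgen b 2))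
      - (α • Xgen b 1 + β • (Xgen b 1 * Xgen b 3 + Xgen b 3 * Xgen b 1)) * (δ • (Xgen b 1 * Xgen b 2))
      = (2 * I * ξ3 * β * δ) •
          (Xgen b 1 * (4 * Xgen b 1 ^ 2 - 3 * (Xgen b 1 ^ 2 + Xgen b 2 ^ 2))) := by
  have hmap : ∀ u v : L, UniversalEnvelopingAlgebra.ι ℂ ⁅u, v⁆
      = UniversalEnvelopingAlgebra.ι ℂ u * UniversalEnvelopingAlgebra.ι ℂ v
        - UniversalEnvelopingAlgebra.ι ℂ v * UniversalEnvelopingAlgebra.ι ℂ u := by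
    intro u v
    letI := LieRing.ofAssociativeRing (A := UniversalEnvelopingAlgebra ℂ L)
    rw [LieHom.map_lie, Ring.lie_def]
  simp only [Xgen]
  set A := UniversalEnvelopingAlgebra ℂ L
  set c : ℂ := 2 * I * ξ3 with hc
  set x : A := UniversalEnvelopingAlgebra.ι ℂ (b 1) with hxd
  set y : A := UniversalEnvelopingAlgebra.ι ℂ (b 2) with hyd
  set z : A := UniversalEnvelopingAlgebra.ι ℂ (b 3) with hzd
  set w : A := algebraMap ℂ A c with hw
  have hsm : ∀ (u : A), c • u = w * u := fun u => Algebra.smul_def c u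
  have e13 := (hmap (b 1) (b 3)).symm
  rw [h13, map_smul, neg_smul, hsm] at e13
  have e23 := (hmap (b 2) (b 3)).symm
  rw [h23, map_smul, hsm] at e23
  have e12 := (hmap (b 1) (b 2)).symm
  rw [h12, map_zero] at e12
  have h1 : z * x = x * z + w * y := by
    rw [sub_eq_iff_eq_add.mp e13]; abel
  have h2 : z * y = y * z - w * x := by
    rw [sub_eq_iff_eq_add.mp e23]; abel
  have h3 : y * x = x * y := (sub_eq_zero.mp e12).symm
  have hwx : w * x = x * w := Algebra.commutes c x
  have key := aux_ring x y z w hwx h1 h2 h3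
  have expand :
      (δ • x ^ 2) * (α • y + β • (y * z + z * y)) - (α • x + β • (x * z + z * x)) * (δ • (x * y))
      = (δ * β) • (x*x*(y*z) + x*x*(z*y) - x*z*(x*y) - z*x*(x*y))
        + (δ * α) • (x*x*y - x*(x*y)) := by
    simp only [pow_two, mul_add, add_mul, smul_mul_assoc, mul_smul_comm, smul_smul, smul_sub,
      smul_add]
    module
  rw [expand, key]
  have e0 : x*x*y - x*(x*y) = (0:A) := by noncomm_ring
  rw [e0, smul_zero, add_zero, ← hsm (x*(x*x)), ← hsm (x*(y*y)),
    show x * (4 * x ^ 2 - 3 * (x ^ 2 + y ^ 2)) = x*(x*x) - 3*(x*(y*y)) by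
      noncomm_ring; simp only [mul_add, mul_smul_comm]; abel]
  rw [show (3:A)*(c • (x*(y*y))) = c • (3*(x*(y*y))) by rw [mul_smul_comm]]
  rw [← smul_sub, smul_smul, show δ*β*c = c*β*δ from by ring]
end

section
/- In U(𝔤), with g01 := α·X1 + β·(X1·X3 + X3·X1), g02 := α·X2 + β·(X2·X3 + X3·X2), g21 := δ·X1·X2, and g22 := δ·X2², the following identity holds: g01·g22 − g21·g02 = 2iξ3·β·δ·X2·(O2 − 4·X1²), where O2 := X1² + X2². -/
open Complex

attribute [local instance] LieRing.ofAssociativeRing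

/-- `g01·g22 − g21·g02 = 2iξ3·β·δ·X2·(O2 − 4X1²)` in `U(𝔤)`. -/
theorem J5_identity (ξ0 ξ3 α β δ : ℂ)
    {L : Type*} [LieRing L] [LieAlgebra ℂ L]
    (b : Module.Basis (Fin 4) ℂ L)
    (h10 : ⁅b 1, b 0⁆ = (-(2 * I * ξ0)) • b 2)
    (h13 : ⁅b 1, b 3⁆ = (-(2 * I * ξ3)) • b 2)
    (h20 : ⁅b 2, b 0⁆ = (2 * I * ξ0) • b 1)
    (h23 : ⁅b 2, b 3⁆ = (2 * I * ξ3) • b 1)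
    (h03 : ⁅b 0, b 3⁆ = 0)
    (h12 : ⁅b 1, b 2⁆ = 0) :
    (α • Xgen b 1 + β • (Xgen b 1 * Xgen b 3 + Xgen b 3 * Xgen b 1)) * (δ • Xgen b 2 ^ 2)
      - (δ • (Xgen b 1 * Xgen b 2)) * (α • Xgen b 2 + β • (Xgen b 2 * Xgen b 3 + Xgen b 3 * Xgen b 2))
      = (2 * I * ξ3 * β * δ) •
          (Xgen b 2 * ((Xgen b 1 ^ 2 + Xgen b 2 ^ 2) - 4 * Xgen b 1 ^ 2)) := by
  have key : ∀ (u v w : Fin 4) (s : ℂ), ⁅b u, b v⁆ = s • b w →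
      Xgen b u * Xgen b v = Xgen b v * Xgen b u + s • Xgen b w := by
    intro u v w s h
    have h2 := (UniversalEnvelopingAlgebra.ι ℂ (L := L)).map_lie (b u) (b v)
    rw [h, Ring.lie_def] at h2
    simp only [map_smul] at h2
    unfold Xgen
    rw [add_comm]
    exact sub_eq_iff_eq_add.mp h2.symm
  have hcomm : Xgen b 1 * Xgen b 2 = Xgen b 2 * Xgen b 1 := by
    have h2 := (UniversalEnvelopingAlgebra.ι ℂ (L := L)).map_lie (b 1) (b 2)
    rw [h12, Ring.lie_def] at h2
    simp only [map_zero] at h2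
    unfold Xgen
    exact sub_eq_zero.mp h2.symm
  set x := Xgen b 1 with hxdef
  set y := Xgen b 2 with hydef
  set z := Xgen b 3 with hzdef
  set c := 2 * I * ξ3 with hcdef
  have hxz : x * z = z * x + (-c) • y := key 1 3 2 (-(2*I*ξ3)) h13
  have hyz : y * z = z * y + c • x := key 2 3 1 (2*I*ξ3) h23
  have h4 : (4 : UniversalEnvelopingAlgebra ℂ L) * (x * x) = (4:ℂ) • (x * x) := by
    rw [Algebra.smul_def, map_ofNat]
  have e3 : y * (x * x) = x * (x * y) := by
    calc y * (x * x) = (y * x) * x := (mul_assoc _ _ _).symm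
    _ = (x * y) * x := by rw [hcomm]
    _ = x * (y * x) := mul_assoc _ _ _
    _ = x * (x * y) := by rw [← hcomm]
  have e1 : x * y * (z * y) = z * (x * (y * y)) + c • (x * (x * y)) - c • (y * (y * y)) := by
    calc x * y * (z * y) = (x * (y * z)) * y := by noncomm_ring
    _ = (x * (z * y + c • x)) * y := by rw [hyz]
    _ = (x * z) * (y * y) + c • (x * (x * y)) := by first
        | module
        | (simp only [smul_add, smul_sub, smul_smul, add_mul, mul_add, sub_mul, mul_sub,
            smul_mul_assoc, neg_mul, mul_neg, smul_neg, mul_smul_comm, mul_assoc, pow_two,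
            neg_smul, h4]
           try module)
    _ = (z * x + (-c) • y) * (y * y) + c • (x * (x * y)) := by rw [hxz]
    _ = z * (x * (y * y)) + c • (x * (x * y)) - c • (y * (y * y)) := by
        all_goals first
        | module
        | (simp only [smul_add, smul_sub, smul_smul, add_mul, mul_add, sub_mul, mul_sub,
            smul_mul_assoc, neg_mul, mul_neg, smul_neg, mul_smul_comm, mul_assoc, pow_two,
            neg_smul, h4]
           try module)
  have e2 : x * (y * (y * z))
      = z * (x * (y * y)) + (2 * c) • (x * (x * y)) - c • (y * (y * y)) := by
    calc x * (y * (y * z)) = x * (y * (z * y + c • x)) := by rw [hyz]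
    _ = x * y * (z * y) + c • (x * (y * x)) := by first
        | module
        | (simp only [smul_add, smul_sub, smul_smul, add_mul, mul_add, sub_mul, mul_sub,
            smul_mul_assoc, neg_mul, mul_neg, smul_neg, mul_smul_comm, mul_assoc, pow_two,
            neg_smul, h4]
           try module)
    _ = x * y * (z * y) + c • ((x * y) * x) := by rw [← mul_assoc x y x]
    _ = x * y * (z * y) + c • ((y * x) * x) := by rw [hcomm]
    _ = x * y * (z * y) + c • (y * (x * x)) := by rw [mul_assoc y x x]
    _ = x * y * (z * y) + c • (x * (x * y)) := by rw [e3]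
    _ = z * (x * (y * y)) + (2 * c) • (x * (x * y)) - c • (y * (y * y)) := by
        rw [e1]; first
        | module
        | (simp only [smul_add, smul_sub, smul_smul, add_mul, mul_add, sub_mul, mul_sub,
            smul_mul_assoc, neg_mul, mul_neg, smul_neg, mul_smul_comm, mul_assoc, pow_two,
            neg_smul, h4]
           try module)
  have hrhs : (c * β * δ) • (y * ((x ^ 2 + y ^ 2) - 4 * x ^ 2))
      = (c * β * δ) • (y * (y * y)) - (3 * (c * β * δ)) • (x * (x * y)) := by
    calc (c * β * δ) • (y * ((x ^ 2 + y ^ 2) - 4 * x ^ 2))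
        = (c * β * δ) • (y * (y * y)) - (3 * (c * β * δ)) • (y * (x * x)) := by
          first
        | module
        | (simp only [smul_add, smul_sub, smul_smul, add_mul, mul_add, sub_mul, mul_sub,
            smul_mul_assoc, neg_mul, mul_neg, smul_neg, mul_smul_comm, mul_assoc, pow_two,
            neg_smul, h4]
           try module)
    _ = (c * β * δ) • (y * (y * y)) - (3 * (c * β * δ)) • (x * (x * y)) := by rw [e3]
  calc (α • x + β • (x * z + z * x)) * (δ • y ^ 2)
      - (δ • (x * y)) * (α • y + β • (y * z + z * y))
      = (β * δ) • ((x * z) * (y * y)) + (β * δ) • (z * (x * (y * y)))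
        - (β * δ) • (x * (y * (y * z))) - (β * δ) • (x * y * (z * y)) := by
        all_goals first
        | module
        | (simp only [smul_add, smul_sub, smul_smul, add_mul, mul_add, sub_mul, mul_sub,
            smul_mul_assoc, neg_mul, mul_neg, smul_neg, mul_smul_comm, mul_assoc, pow_two,
            neg_smul, h4]
           try module)
    _ = (c * β * δ) • (y * (y * y)) - (3 * (c * β * δ)) • (x * (x * y)) := by
        rw [hxz, e2, e1]
        all_goals first
        | module
        | (simp only [smul_add, smul_sub, smul_smul, add_mul, mul_add, sub_mul, mul_sub,
            smul_mul_assoc, neg_mul, mul_neg, smul_neg, mul_smul_comm, mul_assoc, pow_two,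
            neg_smul, h4]
           try module)
    _ = (c * β * δ) • (y * ((x ^ 2 + y ^ 2) - 4 * x ^ 2)) := hrhs.symm
end

section
/- In U(𝔤), with g01 := α·X1 + β·(X1·X3 + X3·X1) and g02 := α·X2 + β·(X2·X3 + X3·X2), the commutator identity [g01, g02] = −4iξ3·β·O2·(α + 2β·X3) holds, where O2 := X1² + X2². -/
open Complex

lemma key {A : Type*} [Ring A] [Algebra ℂ A] (x y z : A) (s α β : ℂ)
    (hyx : y*x = x*y)
    (hzx : z*x = x*z + s•y)
    (hzy : z*y = y*z - s•x) :
    (α•x + β•(x*z+z*x)) * (α•y + β•(y*z+z*y))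
      - (α•y + β•(y*z+z*y)) * (α•x + β•(x*z+z*x))
      = (-(2*s*β)) • ((x^2+y^2)*(algebraMap ℂ A α + (2*β)•z)) := by
  have hyx' : ∀ w : A, y*(x*w) = x*(y*w) := fun w => by
    rw [← mul_assoc, hyx, mul_assoc]
  have hzx' : ∀ w : A, z*(x*w) = x*(z*w) + s•(y*w) := fun w => by
    rw [← mul_assoc, hzx, add_mul, smul_mul_assoc, mul_assoc]
  have hzy' : ∀ w : A, z*(y*w) = y*(z*w) - s•(x*w) := fun w => by
    rw [← mul_assoc, hzy, sub_mul, smul_mul_assoc, mul_assoc]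
  rw [Algebra.algebraMap_eq_smul_one]
  simp only [mul_add, add_mul, mul_sub, sub_mul, smul_mul_assoc, mul_smul_comm,
    mul_assoc, pow_two, mul_one,
    hyx, hzx, hzy, hyx', hzx', hzy',
    smul_add, smul_sub, smul_smul]
  module

/-- `[g01, g02] = −4iξ3·β·O2·(α + 2β·X3)` in `U(𝔤)`. -/
theorem g01_g02_commutator (ξ0 ξ3 α β : ℂ)
    {L : Type*} [LieRing L] [LieAlgebra ℂ L]
    (b : Module.Basis (Fin 4) ℂ L)
    (h10 : ⁅b 1, b 0⁆ = (-(2 * I * ξ0)) • b 2)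
    (h13 : ⁅b 1, b 3⁆ = (-(2 * I * ξ3)) • b 2)
    (h20 : ⁅b 2, b 0⁆ = (2 * I * ξ0) • b 1)
    (h23 : ⁅b 2, b 3⁆ = (2 * I * ξ3) • b 1)
    (h03 : ⁅b 0, b 3⁆ = 0)
    (h12 : ⁅b 1, b 2⁆ = 0) :
    (α • Xgen b 1 + β • (Xgen b 1 * Xgen b 3 + Xgen b 3 * Xgen b 1)) *
        (α • Xgen b 2 + β • (Xgen b 2 * Xgen b 3 + Xgen b 3 * Xgen b 2))
      - (α • Xgen b 2 + β • (Xgen b 2 * Xgen b 3 + Xgen b 3 * Xgen b 2)) *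
        (α • Xgen b 1 + β • (Xgen b 1 * Xgen b 3 + Xgen b 3 * Xgen b 1))
      = (-(4 * I * ξ3 * β)) •
          ((Xgen b 1 ^ 2 + Xgen b 2 ^ 2) *
            (algebraMap ℂ (UniversalEnvelopingAlgebra ℂ L) α + (2 * β) • Xgen b 3)) := by
  set x := Xgen b 1
  set y := Xgen b 2
  set z := Xgen b 3
  have hcomm : ∀ i j : Fin 4, Xgen b i * Xgen b j - Xgen b j * Xgen b i
      = UniversalEnvelopingAlgebra.ι ℂ ⁅b i, b j⁆ := fun i j => by
    letI : LieRing (UniversalEnvelopingAlgebra ℂ L) := LieRing.ofAssociativeRing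
    rw [LieHom.map_lie, Ring.lie_def]; rfl
  have e13 : x * z - z * x = (-(2 * I * ξ3)) • y := by
    rw [hcomm 1 3, h13, map_smul]; rfl
  have e23 : y * z - z * y = (2 * I * ξ3) • x := by
    rw [hcomm 2 3, h23, map_smul]; rfl
  have e12 : x * y - y * x = 0 := by
    rw [hcomm 1 2, h12, map_zero]
  have hyx : y * x = x * y := (sub_eq_zero.mp e12).symm
  have hzx : z * x = x * z + (2 * I * ξ3) • y := by
    have := e13; rw [sub_eq_iff_eq_add] at this
    rw [this]; module
  have hzy : z * y = y * z - (2 * I * ξ3) • x := by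
    have := e23; rw [sub_eq_iff_eq_add] at this
    rw [this]; module
  have := key x y z (2 * I * ξ3) α β hyx hzx hzy
  rw [this]
  congr 1
  ring
end

section
/- Assume ξ0 ≠ 0 and ξ3 ≠ 0, and let D be any derivation of the Lie algebra 𝔤 (a linear map with D[x,y] = [Dx,y] + [x,Dy]). Write D X_ν = Σ_σ N^σ_ν · X_σ with complex coefficients N^σ_ν. Then: N^0_1 = N^3_1 = N^0_2 = N^3_2 = 0; N^1_1 = N^2_2 and N^2_1 = −N^1_2; N^3_0 = −(ξ0/ξ3)·N^0_0 and N^3_3 = −(ξ0/ξ3)·N^0_3; and N^1_3 = (ξ3/ξ0)·N^1_0 and N^2_3 = (ξ3/ξ0)·N^2_0. -/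
open Complex

/-- the coefficient relations satisfied by any derivation of `𝔤`. -/
theorem derivation_coefficient_relations (ξ0 ξ3 : ℂ) (hξ0 : ξ0 ≠ 0) (hξ3 : ξ3 ≠ 0)
    {L : Type*} [LieRing L] [LieAlgebra ℂ L]
    (b : Module.Basis (Fin 4) ℂ L)
    (h10 : ⁅b 1, b 0⁆ = (-(2 * I * ξ0)) • b 2)
    (h13 : ⁅b 1, b 3⁆ = (-(2 * I * ξ3)) • b 2)
    (h20 : ⁅b 2, b 0⁆ = (2 * I * ξ0) • b 1)
    (h23 : ⁅b 2, b 3⁆ = (2 * I * ξ3) • b 1)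
    (h03 : ⁅b 0, b 3⁆ = 0)
    (h12 : ⁅b 1, b 2⁆ = 0)
    (D : L →ₗ[ℂ] L)
    (hD : ∀ x y : L, D ⁅x, y⁆ = ⁅D x, y⁆ + ⁅x, D y⁆)
    (N : Fin 4 → Fin 4 → ℂ)
    (hN : ∀ ν : Fin 4, D (b ν) = ∑ σ : Fin 4, N σ ν • b σ) :
    N 0 1 = 0 ∧ N 3 1 = 0 ∧ N 0 2 = 0 ∧ N 3 2 = 0 ∧
    N 1 1 = N 2 2 ∧ N 2 1 = -N 1 2 ∧
    N 3 0 = -(ξ0 / ξ3) * N 0 0 ∧ N 3 3 = -(ξ0 / ξ3) * N 0 3 ∧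
    N 1 3 = ξ3 / ξ0 * N 1 0 ∧ N 2 3 = ξ3 / ξ0 * N 2 0 := by
  have h2I : (2 * I : ℂ) ≠ 0 := by simp [I_ne_zero]
  have h01 : ⁅b 0, b 1⁆ = -((-(2 * I * ξ0)) • b 2) := by rw [← lie_skew, h10]
  have h02 : ⁅b 0, b 2⁆ = -((2 * I * ξ0) • b 1) := by rw [← lie_skew, h20]
  have h30 : ⁅b 3, b 0⁆ = 0 := by rw [← lie_skew, h03]; simp
  have h21 : ⁅b 2, b 1⁆ = 0 := by rw [← lie_skew, h12]; simp
  have h31 : ⁅b 3, b 1⁆ = -((-(2 * I * ξ3)) • b 2) := by rw [← lie_skew, h13]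
  have h32 : ⁅b 3, b 2⁆ = -((2 * I * ξ3) • b 1) := by rw [← lie_skew, h23]
  -- equation from ⁅b1,b0⁆
  have e1 := hD (b 1) (b 0)
  rw [h10, map_smul, hN 2, hN 1, hN 0] at e1
  simp only [Fin.sum_univ_four, add_lie, lie_add, smul_lie, lie_smul, lie_self,
    h10, h13, h20, h23, h03, h12, h30, h21, h01, h02, h31, h32, smul_zero, smul_smul,
    smul_add, add_zero, zero_add, smul_neg] at e1
  have c1 := fun i => congrArg (fun x => b.repr x i) e1
  simp only [map_add, map_smul, map_neg, Module.Basis.repr_self, Finsupp.smul_apply,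
    Finsupp.coe_add, Finsupp.coe_neg, Pi.add_apply, Pi.neg_apply, Finsupp.single_apply,
    smul_eq_mul, Fin.isValue, Fin.reduceEq, reduceIte, if_true, mul_one, mul_zero,
    neg_zero, add_zero, zero_add] at c1
  -- equation from ⁅b2,b0⁆
  have e2 := hD (b 2) (b 0)
  rw [h20, map_smul, hN 1, hN 2, hN 0] at e2
  simp only [Fin.sum_univ_four, add_lie, lie_add, smul_lie, lie_smul, lie_self,
    h10, h13, h20, h23, h03, h12, h30, h21, h01, h02, h31, h32, smul_zero, smul_smul,
    smul_add, add_zero, zero_add, smul_neg] at e2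
  have c2 := fun i => congrArg (fun x => b.repr x i) e2
  simp only [map_add, map_smul, map_neg, Module.Basis.repr_self, Finsupp.smul_apply,
    Finsupp.coe_add, Finsupp.coe_neg, Pi.add_apply, Pi.neg_apply, Finsupp.single_apply,
    smul_eq_mul, Fin.isValue, Fin.reduceEq, reduceIte, if_true, mul_one, mul_zero,
    neg_zero, add_zero, zero_add] at c2
  -- equation from ⁅b1,b3⁆
  have e3 := hD (b 1) (b 3)
  rw [h13, map_smul, hN 2, hN 1, hN 3] at e3
  simp only [Fin.sum_univ_four, add_lie, lie_add, smul_lie, lie_smul, lie_self,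
    h10, h13, h20, h23, h03, h12, h30, h21, h01, h02, h31, h32, smul_zero, smul_smul,
    smul_add, add_zero, zero_add, smul_neg] at e3
  have c3 := fun i => congrArg (fun x => b.repr x i) e3
  simp only [map_add, map_smul, map_neg, Module.Basis.repr_self, Finsupp.smul_apply,
    Finsupp.coe_add, Finsupp.coe_neg, Pi.add_apply, Pi.neg_apply, Finsupp.single_apply,
    smul_eq_mul, Fin.isValue, Fin.reduceEq, reduceIte, if_true, mul_one, mul_zero,
    neg_zero, add_zero, zero_add] at c3
  -- equation from ⁅b0,b3⁆
  have e4 := hD (b 0) (b 3)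
  rw [h03, map_zero, hN 0, hN 3] at e4
  simp only [Fin.sum_univ_four, add_lie, lie_add, smul_lie, lie_smul, lie_self,
    h10, h13, h20, h23, h03, h12, h30, h21, h01, h02, h31, h32, smul_zero, smul_smul,
    smul_add, add_zero, zero_add, smul_neg] at e4
  have c4 := fun i => congrArg (fun x => b.repr x i) e4
  simp only [map_add, map_smul, map_neg, map_zero, Module.Basis.repr_self, Finsupp.smul_apply,
    Finsupp.coe_add, Finsupp.coe_neg, Finsupp.coe_zero, Pi.add_apply, Pi.neg_apply,
    Pi.zero_apply, Finsupp.single_apply, smul_eq_mul, Fin.isValue, Fin.reduceEq,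
    reduceIte, if_true, mul_one, mul_zero, neg_zero, add_zero, zero_add] at c4
  -- clean scalar equations
  have A1 : N 0 2 = 0 := by
    apply mul_left_cancel₀ (mul_ne_zero h2I hξ0)
    have h := c1 0
    simp only [Fin.isValue, Fin.reduceEq, reduceIte, mul_one, mul_zero, neg_zero, add_zero, zero_add, neg_neg] at h
    linear_combination -h
  have A2 : N 1 2 = -N 2 1 := by
    apply mul_left_cancel₀ (mul_ne_zero h2I hξ0)
    have h := c1 1
    simp only [Fin.isValue, Fin.reduceEq, reduceIte, mul_one, mul_zero, neg_zero, add_zero, zero_add, neg_neg] at h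
    linear_combination -h
  have A3 : ξ0 * N 2 2 = ξ0 * N 1 1 + ξ0 * N 0 0 + ξ3 * N 3 0 := by
    apply mul_left_cancel₀ h2I
    have h := c1 2
    simp only [Fin.isValue, Fin.reduceEq, reduceIte, mul_one, mul_zero, neg_zero, add_zero, zero_add, neg_neg] at h
    linear_combination -h
  have A4 : N 3 2 = 0 := by
    apply mul_left_cancel₀ (mul_ne_zero h2I hξ0)
    have h := c1 3
    simp only [Fin.isValue, Fin.reduceEq, reduceIte, mul_one, mul_zero, neg_zero, add_zero, zero_add, neg_neg] at h
    linear_combination -h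
  have B1 : N 0 1 = 0 := by
    apply mul_left_cancel₀ (mul_ne_zero h2I hξ0)
    have h := c2 0
    simp only [Fin.isValue, Fin.reduceEq, reduceIte, mul_one, mul_zero, neg_zero, add_zero, zero_add, neg_neg] at h
    linear_combination h
  have B2 : ξ0 * N 1 1 = ξ0 * N 2 2 + ξ0 * N 0 0 + ξ3 * N 3 0 := by
    apply mul_left_cancel₀ h2I
    have h := c2 1
    simp only [Fin.isValue, Fin.reduceEq, reduceIte, mul_one, mul_zero, neg_zero, add_zero, zero_add, neg_neg] at h
    linear_combination h
  have B3 : N 3 1 = 0 := by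
    apply mul_left_cancel₀ (mul_ne_zero h2I hξ0)
    have h := c2 3
    simp only [Fin.isValue, Fin.reduceEq, reduceIte, mul_one, mul_zero, neg_zero, add_zero, zero_add, neg_neg] at h
    linear_combination h
  have C3 : ξ3 * N 2 2 = ξ3 * N 1 1 + ξ0 * N 0 3 + ξ3 * N 3 3 := by
    apply mul_left_cancel₀ h2I
    have h := c3 2
    simp only [Fin.isValue, Fin.reduceEq, reduceIte, mul_one, mul_zero, neg_zero, add_zero, zero_add, neg_neg] at h
    linear_combination -h
  have D1 : ξ3 * N 2 0 = ξ0 * N 2 3 := by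
    apply mul_left_cancel₀ h2I
    have h := c4 1
    simp only [Fin.isValue, Fin.reduceEq, reduceIte, mul_one, mul_zero, neg_zero, add_zero, zero_add, neg_neg] at h
    linear_combination -h
  have D2 : ξ0 * N 1 3 = ξ3 * N 1 0 := by
    apply mul_left_cancel₀ h2I
    have h := c4 2
    simp only [Fin.isValue, Fin.reduceEq, reduceIte, mul_one, mul_zero, neg_zero, add_zero, zero_add, neg_neg] at h
    linear_combination -h
  have HA : N 1 1 = N 2 2 := by
    apply mul_left_cancel₀ (mul_ne_zero (two_ne_zero) hξ0)
    linear_combination B2 - A3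
  refine ⟨B1, B3, A1, A4, HA, by linear_combination A2, ?_, ?_, ?_, ?_⟩
  · field_simp
    linear_combination (-1/2 : ℂ) * (A3 + B2)
  · field_simp
    linear_combination -C3 - ξ3 * HA
  · field_simp
    linear_combination D2
  · field_simp
    linear_combination -D1
end
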